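/- For 0 < τ < 1/3 and real ξ, the equation (1 + τξ²)·sinh(ξ) = ξ·cosh(ξ) (equivalently m_τ(ξ) = 1) has exactly three real solutions: ξ = 0 and ξ = ±k₀ for a unique k₀ > 0. -/
import Mathlib

open Real Set

private lemma aux_sinh_lt (x : ℝ) (hx : 0 < x) : Real.sinh x < x * Real.cosh x := by
  have h : StrictMonoOn (fun x : ℝ => x * Real.cosh x - Real.sinh x) (Set.Ici 0) := by
    apply strictMonoOn_of_deriv_pos (convex_Ici 0)
    · fun_prop
    · intro x hx
      rw [interior_Ici, mem_Ioi] at hx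
      have hd : HasDerivAt (fun x : ℝ => x * Real.cosh x - Real.sinh x)
          ((1 * Real.cosh x + x * Real.sinh x) - Real.cosh x) x :=
        ((hasDerivAt_id x).mul (Real.hasDerivAt_cosh x)).sub (Real.hasDerivAt_sinh x)
      rw [hd.deriv]
      have := Real.sinh_pos_iff.mpr hx
      nlinarith
  have := h (Set.self_mem_Ici) (le_of_lt hx : (0:ℝ) ≤ x) hx
  simpa using this

private lemma aux_W1_pos (x : ℝ) (hx : 0 < x) :
    0 < 2*x + x*(Real.cosh x^2 + Real.sinh x^2) - 3*(Real.sinh x * Real.cosh x) := by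
  have h : StrictMonoOn (fun x : ℝ => 2*x + x*(Real.cosh x^2 + Real.sinh x^2)
      - 3*(Real.sinh x * Real.cosh x)) (Set.Ici 0) := by
    apply strictMonoOn_of_deriv_pos (convex_Ici 0)
    · fun_prop
    · intro x hx
      rw [interior_Ici, mem_Ioi] at hx
      have hd : HasDerivAt (fun x : ℝ => 2*x + x*(Real.cosh x^2 + Real.sinh x^2)
          - 3*(Real.sinh x * Real.cosh x))
          ((2*1) + (1 * (Real.cosh x^2 + Real.sinh x^2)
            + x * ((2 * Real.cosh x ^ 1 * Real.sinh x) + (2 * Real.sinh x ^ 1 * Real.cosh x)))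
          - 3 * (Real.cosh x * Real.cosh x + Real.sinh x * Real.sinh x)) x := by
        exact (((hasDerivAt_id x).const_mul (2:ℝ)).add
          ((hasDerivAt_id x).mul ((((Real.hasDerivAt_cosh x).pow 2)).add
            ((Real.hasDerivAt_sinh x).pow 2)))).sub
          ((((Real.hasDerivAt_sinh x).mul (Real.hasDerivAt_cosh x))).const_mul 3)
      rw [hd.deriv]
      have h1 := aux_sinh_lt x hx
      have h2 := Real.sinh_pos_iff.mpr hx
      have h3 := Real.cosh_sq_sub_sinh_sq x
      nlinarith [mul_pos h2 (sub_pos.mpr h1)]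
  have := h (Set.self_mem_Ici) (le_of_lt hx : (0:ℝ) ≤ x) hx
  simpa using this

private lemma aux_W_pos (x : ℝ) (hx : 0 < x) :
    0 < x^2 + x * Real.sinh x * Real.cosh x - 2 * Real.sinh x ^ 2 := by
  have h : StrictMonoOn (fun x : ℝ => x^2 + x * Real.sinh x * Real.cosh x
      - 2 * Real.sinh x ^ 2) (Set.Ici 0) := by
    apply strictMonoOn_of_deriv_pos (convex_Ici 0)
    · fun_prop
    · intro x hx
      rw [interior_Ici, mem_Ioi] at hx
      have hd : HasDerivAt (fun x : ℝ => x^2 + x * Real.sinh x * Real.cosh x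
          - 2 * Real.sinh x ^ 2)
          ((2 * x ^ 1) + ((1 * Real.sinh x + x * Real.cosh x) * Real.cosh x
            + (x * Real.sinh x) * Real.sinh x)
          - 2 * (2 * Real.sinh x ^ 1 * Real.cosh x)) x := by
        exact ((hasDerivAt_pow 2 x).add
          (((hasDerivAt_id x).mul (Real.hasDerivAt_sinh x)).mul (Real.hasDerivAt_cosh x))).sub
          (((Real.hasDerivAt_sinh x).pow 2).const_mul 2)
      rw [hd.deriv]
      have := aux_W1_pos x hx
      nlinarith
  have := h (Set.self_mem_Ici) (le_of_lt hx : (0:ℝ) ≤ x) hx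
  simpa using this

private lemma aux_cube (x : ℝ) (hx : 0 < x) :
    x^3/3 < x * Real.cosh x - Real.sinh x := by
  have h : StrictMonoOn (fun x : ℝ => x * Real.cosh x - Real.sinh x - x^3/3) (Set.Ici 0) := by
    apply strictMonoOn_of_deriv_pos (convex_Ici 0)
    · fun_prop
    · intro x hx
      rw [interior_Ici, mem_Ioi] at hx
      have hd : HasDerivAt (fun x : ℝ => x * Real.cosh x - Real.sinh x - x^3/3)
          (((1 * Real.cosh x + x * Real.sinh x) - Real.cosh x) - (3 * x ^ 2)/3) x :=
        (((hasDerivAt_id x).mul (Real.hasDerivAt_cosh x)).sub (Real.hasDerivAt_sinh x)).sub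
          ((hasDerivAt_pow 3 x).div_const 3)
      rw [hd.deriv]
      have h1 : x < Real.sinh x := Real.self_lt_sinh_iff.mpr hx
      nlinarith
  have := h (Set.self_mem_Ici) (le_of_lt hx : (0:ℝ) ≤ x) hx
  simp only [Real.cosh_zero, Real.sinh_zero] at this
  nlinarith [this]

private lemma aux_phi_anti : StrictAntiOn
    (fun ξ : ℝ => (ξ * Real.cosh ξ - Real.sinh ξ)/(ξ^2 * Real.sinh ξ)) (Set.Ioi 0) := by
  apply strictAntiOn_of_deriv_neg (convex_Ioi 0)
  · apply ContinuousOn.div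
    · fun_prop
    · fun_prop
    · intro x hx
      have hx' := mem_Ioi.mp hx
      have hs := Real.sinh_pos_iff.mpr hx'
      positivity
  · intro x hx
    rw [interior_Ioi, mem_Ioi] at hx
    have hs := Real.sinh_pos_iff.mpr hx
    have hdenom : x^2 * Real.sinh x ≠ 0 := by positivity
    have hd : HasDerivAt (fun ξ : ℝ => (ξ * Real.cosh ξ - Real.sinh ξ)/(ξ^2 * Real.sinh ξ))
        ((((1 * Real.cosh x + x * Real.sinh x) - Real.cosh x) * (x^2 * Real.sinh x)
          - (x * Real.cosh x - Real.sinh x) * ((2 * x ^ 1) * Real.sinh x + x^2 * Real.cosh x))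
          / (x^2 * Real.sinh x)^2) x := by
      exact (((hasDerivAt_id x).mul (Real.hasDerivAt_cosh x)).sub (Real.hasDerivAt_sinh x)).div
        ((hasDerivAt_pow 2 x).mul (Real.hasDerivAt_sinh x)) hdenom
    rw [hd.deriv]
    apply div_neg_of_neg_of_pos
    · have hW := aux_W_pos x hx
      have hid := Real.cosh_sq_sub_sinh_sq x
      have hnum : (1 * Real.cosh x + x * Real.sinh x - Real.cosh x) * (x^2 * Real.sinh x)
          - (x * Real.cosh x - Real.sinh x) * ((2 * x ^ 1) * Real.sinh x + x^2 * Real.cosh x)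
          = -(x * (x^2 + x * Real.sinh x * Real.cosh x - 2 * Real.sinh x ^ 2)) := by
        linear_combination (-x^3) * hid
      rw [hnum]
      exact neg_lt_zero.mpr (mul_pos hx hW)
    · positivity

theorem dispersion_roots_weak_tension (τ : ℝ) (hτ0 : 0 < τ) (hτ : τ < 1/3) :
    ∃! k₀ : ℝ, 0 < k₀ ∧
      {ξ : ℝ | (1 + τ * ξ ^ 2) * Real.sinh ξ = ξ * Real.cosh ξ} = {0, k₀, -k₀} := by
  set φ : ℝ → ℝ := fun ξ => (ξ * Real.cosh ξ - Real.sinh ξ)/(ξ^2 * Real.sinh ξ) with hφdef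
  -- the key equivalence: for x > 0, equation holds iff φ x = τ
  have key : ∀ x : ℝ, 0 < x →
      ((1 + τ * x ^ 2) * Real.sinh x = x * Real.cosh x ↔ φ x = τ) := by
    intro x hx
    have hs := Real.sinh_pos_iff.mpr hx
    have hdenom : (0:ℝ) < x^2 * Real.sinh x := by positivity
    rw [hφdef]
    simp only
    rw [div_eq_iff (ne_of_gt hdenom)]
    constructor <;> intro h <;> nlinarith
  -- choose a small
  obtain ⟨b, hb1, hb2⟩ : ∃ b : ℝ, 1 ≤ b ∧ 3/τ ≤ b := ⟨max 1 (3/τ), le_max_left _ _, le_max_right _ _⟩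
  have hb0 : 0 < b := lt_of_lt_of_le one_pos hb1
  have ha : ∃ a : ℝ, a ∈ Set.Ioo (0:ℝ) b ∧ Real.cosh a < 1/(3*τ) := by
    have h1 : (1:ℝ) < 1/(3*τ) := by
      rw [lt_div_iff₀ (by linarith)]; linarith
    have h2 : ∀ᶠ x in nhdsWithin (0:ℝ) (Set.Ioi 0), Real.cosh x < 1/(3*τ) := by
      apply Filter.Eventually.filter_mono nhdsWithin_le_nhds
      have := Real.continuous_cosh.tendsto 0
      rw [Real.cosh_zero] at this
      exact this.eventually_lt_const h1
    have h3 : ∀ᶠ x in nhdsWithin (0:ℝ) (Set.Ioi 0), x ∈ Set.Ioo (0:ℝ) b :=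
      Ioo_mem_nhdsGT_of_mem ⟨le_refl _, hb0⟩
    obtain ⟨a, ha1, ha2⟩ := (h3.and h2).exists
    exact ⟨a, ha1, ha2⟩
  obtain ⟨a, ⟨ha0, hab⟩, hacosh⟩ := ha
  -- φ a > τ
  have hφa : τ < φ a := by
    have hs := Real.sinh_pos_iff.mpr ha0
    have hc := Real.cosh_pos (x := a)
    have hdenom : (0:ℝ) < a^2 * Real.sinh a := by positivity
    rw [hφdef]; simp only
    rw [lt_div_iff₀ hdenom]
    have h1 := aux_cube a ha0
    have h2 := aux_sinh_lt a ha0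
    have h3 : τ * Real.cosh a < 1/3 := by
      rw [lt_div_iff₀ (by linarith : (0:ℝ) < 3*τ)] at hacosh
      nlinarith
    nlinarith [mul_pos (mul_pos ha0 ha0) ha0, sq_nonneg a]
  -- φ b < τ
  have hφb : φ b < τ := by
    have hs1 : (1:ℝ) < Real.sinh 1 := Real.self_lt_sinh_iff.mpr one_pos
    have hsb : (1:ℝ) < Real.sinh b := lt_of_lt_of_le hs1 (Real.sinh_le_sinh.mpr hb1)
    have hcb : Real.cosh b < 2 * Real.sinh b := by
      have h1 : Real.cosh b - Real.sinh b = Real.exp (-b) := Real.cosh_sub_sinh b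
      have h2 : Real.exp (-b) ≤ 1 := Real.exp_le_one_iff.mpr (by linarith)
      linarith
    have hdenom : (0:ℝ) < b^2 * Real.sinh b := by positivity
    rw [hφdef]; simp only
    rw [div_lt_iff₀ hdenom]
    have htb : 3 ≤ τ * b := by
      rw [div_le_iff₀ hτ0] at hb2; linarith
    have hsbpos : 0 < Real.sinh b := by linarith
    nlinarith [mul_pos hb0 hsbpos, mul_pos (mul_pos hb0 hb0) hsbpos]
  -- IVT: get the root k₀
  have hcont : ContinuousOn (fun ξ : ℝ => (1 + τ * ξ ^ 2) * Real.sinh ξ - ξ * Real.cosh ξ)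
      (Set.Icc a b) := by fun_prop
  have hfa : (1 + τ * a ^ 2) * Real.sinh a - a * Real.cosh a < 0 := by
    have hs := Real.sinh_pos_iff.mpr ha0
    have hdenom : (0:ℝ) < a^2 * Real.sinh a := by positivity
    rw [hφdef] at hφa; simp only at hφa
    rw [lt_div_iff₀ hdenom] at hφa
    nlinarith
  have hfb : 0 < (1 + τ * b ^ 2) * Real.sinh b - b * Real.cosh b := by
    have hs := Real.sinh_pos_iff.mpr hb0
    have hdenom : (0:ℝ) < b^2 * Real.sinh b := by positivity
    rw [hφdef] at hφb; simp only at hφb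
    rw [div_lt_iff₀ hdenom] at hφb
    nlinarith
  obtain ⟨k₀, hk₀mem, hk₀⟩ : ∃ k₀ ∈ Set.Ioo a b,
      (1 + τ * k₀ ^ 2) * Real.sinh k₀ - k₀ * Real.cosh k₀ = 0 := by
    have := intermediate_value_Ioo (le_of_lt hab) hcont
    obtain ⟨k, hk1, hk2⟩ := this ⟨hfa, hfb⟩
    exact ⟨k, hk1, hk2⟩
  have hk₀pos : 0 < k₀ := lt_trans ha0 hk₀mem.1
  have hroot : (1 + τ * k₀ ^ 2) * Real.sinh k₀ = k₀ * Real.cosh k₀ := by linarith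
  have hφk₀ : φ k₀ = τ := (key k₀ hk₀pos).mp hroot
  -- uniqueness of positive root
  have huniq : ∀ x : ℝ, 0 < x → (1 + τ * x ^ 2) * Real.sinh x = x * Real.cosh x → x = k₀ := by
    intro x hx hroot'
    have hφx : φ x = τ := (key x hx).mp hroot'
    rcases lt_trichotomy x k₀ with h | h | h
    · exfalso
      have : φ k₀ < φ x := aux_phi_anti (mem_Ioi.mpr hx) (mem_Ioi.mpr hk₀pos) h
      rw [hφx, hφk₀] at this; exact lt_irrefl τ this
    · exact h
    · exfalso
      have : φ x < φ k₀ := aux_phi_anti (mem_Ioi.mpr hk₀pos) (mem_Ioi.mpr hx) h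
      rw [hφx, hφk₀] at this; exact lt_irrefl τ this
  -- oddness
  have hodd : ∀ x : ℝ, (1 + τ * (-x) ^ 2) * Real.sinh (-x) - (-x) * Real.cosh (-x)
      = -((1 + τ * x ^ 2) * Real.sinh x - x * Real.cosh x) := by
    intro x
    rw [Real.sinh_neg, Real.cosh_neg]; ring
  have hset : {ξ : ℝ | (1 + τ * ξ ^ 2) * Real.sinh ξ = ξ * Real.cosh ξ}
      = {0, k₀, -k₀} := by
    ext ξ
    simp only [Set.mem_setOf_eq, Set.mem_insert_iff, Set.mem_singleton_iff]
    constructor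
    · intro h
      rcases lt_trichotomy ξ 0 with hξ | hξ | hξ
      · right; right
        have h1 : (1 + τ * (-ξ) ^ 2) * Real.sinh (-ξ) = (-ξ) * Real.cosh (-ξ) := by
          have := hodd ξ
          linarith [this]
        have := huniq (-ξ) (by linarith) h1
        linarith
      · left; exact hξ
      · right; left; exact huniq ξ hξ h
    · intro h
      rcases h with h | h | h
      · simp [h]
      · rw [h]; exact hroot
      · rw [h]
        have := hodd k₀
        linarith [this, hroot]
  refine ⟨k₀, ⟨hk₀pos, hset⟩, ?_⟩
  rintro k' ⟨hk'pos, hset'⟩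
  have hmem : k' ∈ ({0, k₀, -k₀} : Set ℝ) := by
    rw [← hset, hset']
    simp
  simp only [Set.mem_insert_iff, Set.mem_singleton_iff] at hmem
  rcases hmem with h | h | h
  · exact absurd h (ne_of_gt hk'pos)
  · exact h
  · exfalso; rw [h] at hk'pos; linarith
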